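/- Let R and S be (unital, associative) rings such that R ⊗_ℤ S = 0 as abelian groups, and let r = char R and s = char S. Then (r,s) ≠ (0,0); moreover, if r ≠ 0 then the image of r in S is invertible. -/

import Mathlib

open Submodule

private lemma zmod_baer (n : ℕ) [NeZero n] : Module.Baer (ZMod n) (ZMod n) := by
  haveI : IsPrincipalIdealRing (ZMod n) :=
    IsPrincipalIdealRing.of_surjective (Int.castRingHom (ZMod n)) ZMod.intCast_surjective
  intro I g
  rcases IsPrincipalIdealRing.principal I with ⟨m, rfl⟩
  have hm : m ∈ Ideal.span {m} := Submodule.subset_span (Set.mem_singleton _)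
  set v := g ⟨m, hm⟩ with hv
  have hn : n ≠ 0 := NeZero.ne n
  set d := Nat.gcd n m.val with hd
  have hdn : d ∣ n := Nat.gcd_dvd_left _ _
  have hdm : d ∣ m.val := Nat.gcd_dvd_right _ _
  have hd0 : d ≠ 0 := fun h0 => hn (by simpa [h0] using hdn)
  have ham : ((n / d : ℕ) : ZMod n) * m = 0 := by
    have : ((n / d : ℕ) : ZMod n) * m = (((n / d) * m.val : ℕ) : ZMod n) := by
      push_cast [ZMod.natCast_val, ZMod.cast_id]
      ring
    rw [this, ZMod.natCast_eq_zero_iff]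
    obtain ⟨k, hk⟩ := hdm
    refine ⟨k, ?_⟩
    rw [hk, ← mul_assoc, Nat.div_mul_cancel hdn]
  have hav : ((n / d : ℕ) : ZMod n) * v = 0 := by
    have h1 : ((n / d : ℕ) : ZMod n) • (⟨m, hm⟩ : Ideal.span {m}) = 0 := by
      ext
      simpa [smul_eq_mul] using ham
    calc ((n / d : ℕ) : ZMod n) * v = g (((n / d : ℕ) : ZMod n) • ⟨m, hm⟩) := by
          rw [map_smul]; rfl
      _ = 0 := by rw [h1, map_zero]
  have hdv : d ∣ v.val := by
    have : (((n / d) * v.val : ℕ) : ZMod n) = 0 := by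
      push_cast [ZMod.natCast_val, ZMod.cast_id]
      rw [hav]
    rw [ZMod.natCast_eq_zero_iff] at this
    have hpos : 0 < n / d :=
      Nat.div_pos (Nat.le_of_dvd (Nat.pos_of_ne_zero hn) hdn) (Nat.pos_of_ne_zero hd0)
    have hnn : n / d * d = n := Nat.div_mul_cancel hdn
    obtain ⟨c, hc⟩ := this
    refine ⟨c, Nat.eq_of_mul_eq_mul_left hpos ?_⟩
    rw [hc]
    conv_lhs => rw [← hnn]
    rw [mul_assoc]
  have hdspan : ∃ y : ZMod n, (d : ZMod n) = m * y := by
    have hb := Nat.gcd_eq_gcd_ab n m.val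
    refine ⟨((Nat.gcdB n m.val : ℤ) : ZMod n), ?_⟩
    have : ((d : ℤ) : ZMod n) = ((n * Nat.gcdA n m.val + m.val * Nat.gcdB n m.val : ℤ) : ZMod n) :=
      congrArg (fun z : ℤ => ((z : ZMod n))) hb
    push_cast at this
    simpa [ZMod.natCast_self, ZMod.natCast_val, ZMod.cast_id] using this
  obtain ⟨y, hy⟩ := hdspan
  obtain ⟨w, hw⟩ := hdv
  have hvm : ∃ c : ZMod n, v = c * m := by
    refine ⟨(w : ZMod n) * y, ?_⟩
    have : v = ((d * w : ℕ) : ZMod n) := by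
      rw [← hw]; simp [ZMod.natCast_val, ZMod.cast_id]
    rw [this]
    push_cast
    rw [hy]; ring
  obtain ⟨c, hc⟩ := hvm
  refine ⟨LinearMap.toSpanSingleton (ZMod n) (ZMod n) c, fun x hx => ?_⟩
  obtain ⟨e, rfl⟩ := Ideal.mem_span_singleton'.mp hx
  have : (⟨e * m, hx⟩ : Ideal.span {m}) = e • ⟨m, hm⟩ := by ext; simp [smul_eq_mul]
  rw [this, map_smul, ← hv, hc, LinearMap.toSpanSingleton_apply]
  simp [smul_eq_mul]; ring

private lemma exists_nsmul_eq_one (R S : Type) [Ring R] [Ring S]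
    (h : Subsingleton (TensorProduct ℤ R S)) (r : ℕ) [NeZero r] [CharP R r] :
    ∃ t : S, r • t = 1 := by
  have hRtor : ∀ x : R, r • x = 0 := fun x => by
    have h0 : ((r : ℕ) : R) = 0 := CharP.cast_eq_zero R r
    rw [nsmul_eq_mul, h0, zero_mul]
  haveI : Module (ZMod r) R := AddCommGroup.zmodModule hRtor
  set i : ZMod r →ₗ[ZMod r] R := LinearMap.toSpanSingleton (ZMod r) R 1 with hi_def
  have hival : ∀ c : ZMod r, i c = ((c.val : ℕ) : R) := by
    intro c
    show c • (1 : R) = ((c.val : ℕ) : R)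
    conv_lhs => rw [show c = ((c.val : ℕ) : ZMod r) by rw [ZMod.natCast_val, ZMod.cast_id]]
    rw [Nat.cast_smul_eq_nsmul, nsmul_eq_mul, mul_one]
  have hi : Function.Injective i := by
    intro a b hab
    have : i (a - b) = 0 := by rw [map_sub, hab, sub_self]
    rw [hival] at this
    have hdvd : r ∣ (a - b).val := (CharP.cast_eq_zero_iff R r _).mp this
    have hlt : (a - b).val < r := ZMod.val_lt _
    have h4 : a - b = 0 := (ZMod.val_eq_zero _).mp (Nat.eq_zero_of_dvd_of_lt hdvd hlt)
    exact sub_eq_zero.mp h4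
  obtain ⟨hmap, hcomp⟩ := (zmod_baer r).extension_property i hi LinearMap.id
  have h1 : hmap 1 = 1 := by
    have := congrArg (fun f : ZMod r →ₗ[ZMod r] ZMod r => f 1) hcomp
    simpa [hi_def, LinearMap.toSpanSingleton_apply, one_smul] using this
  -- quotient S ⧸ rS
  set σ : S →+ S := AddMonoidHom.mk' (fun b => r • b) (fun a b => smul_add r a b) with hσ
  set H : AddSubgroup S := σ.range with hH
  haveI : Module (ZMod r) (S ⧸ H) := QuotientAddGroup.zmodModule (n := r) (fun x => ⟨x, rfl⟩)
  set π : S →+ S ⧸ H := QuotientAddGroup.mk' H with hπ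
  set φ : R →+ S →+ S ⧸ H :=
    { toFun := fun a => (DistribMulAction.toAddMonoidHom (S ⧸ H) (hmap a)).comp π
      map_zero' := by
        ext b
        show hmap 0 • (QuotientAddGroup.mk' H) b = 0
        rw [map_zero]; exact zero_smul (ZMod r) ((QuotientAddGroup.mk' H) b)
      map_add' := by
        intro a a'
        ext b
        show hmap (a + a') • (QuotientAddGroup.mk' H) b = _
        rw [map_add, add_smul]
        rfl } with hφ
  have hcompat : ∀ (z : ℤ) (a : R) (b : S), φ (z • a) b = φ a (z • b) := by
    intro z a b
    show hmap (z • a) • (π b) = hmap a • (π (z • b))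
    rw [map_zsmul hmap z a, map_zsmul π z b, smul_assoc, smul_comm]
  set L : TensorProduct ℤ R S →+ S ⧸ H := TensorProduct.liftAddHom φ hcompat with hL
  have hzero : L ((1 : R) ⊗ₜ[ℤ] (1 : S)) = 0 := by
    rw [Subsingleton.elim ((1 : R) ⊗ₜ[ℤ] (1 : S)) 0, map_zero]
  have hval : L ((1 : R) ⊗ₜ[ℤ] (1 : S)) = π 1 := by
    rw [hL, TensorProduct.liftAddHom_tmul]
    show hmap 1 • (π 1) = π 1
    rw [h1, one_smul]
  have : π (1 : S) = 0 := by rw [← hval, hzero]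
  have hmem : (1 : S) ∈ H := by
    refine (QuotientAddGroup.eq_zero_iff (1 : S)).mp ?_
    simpa [hπ, QuotientAddGroup.mk'_apply] using this
  obtain ⟨t, ht⟩ := hmem
  exact ⟨t, ht⟩

private lemma char_zero_absurd (R S : Type) [Ring R] [Ring S]
    (h : Subsingleton (TensorProduct ℤ R S)) [CharZero R] [CharZero S] : False := by
  obtain ⟨fR, hfR⟩ := (Module.Baer.of_divisible ℚ).extension_property_addMonoidHom
      (Int.castAddHom R) (fun a b hab => by
        have : ((a : ℤ) : R) = ((b : ℤ) : R) := by simpa using hab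
        exact_mod_cast this)
      (Int.castAddHom ℚ)
  obtain ⟨fS, hfS⟩ := (Module.Baer.of_divisible ℚ).extension_property_addMonoidHom
      (Int.castAddHom S) (fun a b hab => by
        have : ((a : ℤ) : S) = ((b : ℤ) : S) := by simpa using hab
        exact_mod_cast this)
      (Int.castAddHom ℚ)
  have hfR1 : fR 1 = 1 := by
    have := congrArg (fun g : ℤ →+ ℚ => g 1) hfR
    simpa using this
  have hfS1 : fS 1 = 1 := by
    have := congrArg (fun g : ℤ →+ ℚ => g 1) hfS
    simpa using this
  set φ : R →+ S →+ ℚ :=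
    { toFun := fun a => (AddMonoidHom.mulLeft (fR a)).comp fS
      map_zero' := by
        ext b
        show fR 0 * fS b = 0
        rw [map_zero, zero_mul]
      map_add' := by
        intro a a'
        ext b
        show fR (a + a') * fS b = fR a * fS b + fR a' * fS b
        rw [map_add, add_mul] } with hφ
  have hcompat : ∀ (z : ℤ) (a : R) (b : S), φ (z • a) b = φ a (z • b) := by
    intro z a b
    show fR (z • a) * fS b = fR a * fS (z • b)
    rw [map_zsmul, map_zsmul, zsmul_eq_mul, zsmul_eq_mul]
    ring
  have h0 : TensorProduct.liftAddHom φ hcompat ((1 : R) ⊗ₜ[ℤ] (1 : S)) = 0 := by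
    rw [Subsingleton.elim ((1 : R) ⊗ₜ[ℤ] (1 : S)) 0, map_zero]
  rw [TensorProduct.liftAddHom_tmul] at h0
  have : (1 : ℚ) = 0 := by
    have h1 : φ (1 : R) (1 : S) = 1 := by
      show fR 1 * fS 1 = 1
      rw [hfR1, hfS1, mul_one]
    rw [← h1, h0]
  exact one_ne_zero this

/-- Let `R` and `S` be rings such that `R ⊗_ℤ S = 0` (as abelian groups), and let
`r = char R` and `s = char S`. Then `(r, s) ≠ (0, 0)`; moreover, if `r ≠ 0`, then
the image of `r` in `S` is invertible. -/
theorem char_of_tensor_eq_zero (R S : Type) [Ring R] [Ring S]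
    (h : Subsingleton (TensorProduct ℤ R S)) :
    (ringChar R, ringChar S) ≠ (0, 0) ∧
      (ringChar R ≠ 0 → IsUnit ((ringChar R : ℕ) : S)) := by
  constructor
  · intro h0
    have hR : ringChar R = 0 := congrArg Prod.fst h0
    have hS : ringChar S = 0 := congrArg Prod.snd h0
    haveI : CharP R 0 := hR ▸ ringChar.charP R
    haveI : CharP S 0 := hS ▸ ringChar.charP S
    haveI : CharZero R := CharP.charP_to_charZero R
    haveI : CharZero S := CharP.charP_to_charZero S
    exact char_zero_absurd R S h
  · intro hr
    haveI : NeZero (ringChar R) := ⟨hr⟩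
    haveI := ringChar.charP R
    obtain ⟨t, ht⟩ := exists_nsmul_eq_one R S h (ringChar R)
    have h1 : ((ringChar R : ℕ) : S) * t = 1 := by
      rw [← nsmul_eq_mul]; exact ht
    have h2 : t * ((ringChar R : ℕ) : S) = 1 := by
      rw [← (Nat.cast_commute (ringChar R) t).eq]; exact h1
    exact ⟨⟨_, t, h1, h2⟩, rfl⟩
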